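/- arXiv:math/0612657 — 5 statements merged into one kernel-verified Lean document; each statement's English description precedes it below -/
import Mathlib

section
/- Let f : Z → W be a proper morphism of schemes of finite type over a field k, and let w ∈ W be a closed point whose set-theoretic fibre f⁻¹(w) consists of a single point z. If the induced homomorphism of local rings f^♯_z : O_{W,w} → O_{Z,z} is an isomorphism, then there exist open neighbourhoods U of z in Z and V of w in W with f⁻¹(V) ⊆ U such that f restricts to an isomorphism U → V (so the birational inverse f⁻¹ is defined and a local isomorphism at w). -/
open AlgebraicGeometry CategoryTheory

/-- `f` restricts to an isomorphism from the open subscheme `U` onto the open subscheme `V`. -/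
def Scheme.RestrictsToIsoOn {Z W : AlgebraicGeometry.Scheme}
    (f : Z ⟶ W) (U : Z.Opens) (V : W.Opens) : Prop :=
  ∃ e : U ≤ f ⁻¹ᵁ V, IsIso (f.resLE V U e)

/-- A scheme locally of finite type over a locally noetherian scheme is locally noetherian. -/
lemma aux_isLocallyNoetherian {X Y : AlgebraicGeometry.Scheme} (f : X ⟶ Y)
    [LocallyOfFiniteType f] [IsLocallyNoetherian Y] : IsLocallyNoetherian X := by
  have H : ∀ x : X, ∃ U : X.affineOpens, x ∈ U.1 ∧ IsNoetherianRing Γ(X, U.1) := by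
    intro x
    obtain ⟨_, ⟨V : Y.Opens, hV, rfl⟩, hxV, -⟩ :=
      Y.isBasis_affineOpens.exists_subset_of_mem_open (Set.mem_univ (f.base x)) isOpen_univ
    obtain ⟨_, ⟨U : X.Opens, hU, rfl⟩, hxU, hUV⟩ :=
      X.isBasis_affineOpens.exists_subset_of_mem_open (show x ∈ f ⁻¹ᵁ V from hxV) (f ⁻¹ᵁ V).2
    have hft : RingHom.FiniteType (f.appLE V U hUV).hom :=
      LocallyOfFiniteType.finiteType_of_affine_subset f hV hU hUV
    have hnoeth : IsNoetherianRing Γ(Y, V) := IsLocallyNoetherian.component_noetherian ⟨V, hV⟩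
    refine ⟨⟨U, hU⟩, hxU, ?_⟩
    letI := (f.appLE V U hUV).hom.toAlgebra
    have : Algebra.FiniteType Γ(Y, V) Γ(X, U) := hft
    exact Algebra.FiniteType.isNoetherianRing Γ(Y, V) Γ(X, U)
  choose U hxU hnoeth using H
  refine isLocallyNoetherian_of_affine_cover (S := U) ?_ hnoeth
  rw [eq_top_iff]
  intro x _
  exact TopologicalSpace.Opens.mem_iSup.mpr ⟨x, hxU x⟩

/-- Cancellation along `fromSpecStalkOfMem`. -/
lemma aux_fromSpecStalkOfMem_cancel {X T : AlgebraicGeometry.Scheme} (V : X.Opens) (x : X)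
    (h : x ∈ V) (p q : V.toScheme ⟶ T)
    (H : V.fromSpecStalkOfMem x h ≫ p = V.fromSpecStalkOfMem x h ≫ q) :
    V.toScheme.fromSpecStalk ⟨x, h⟩ ≫ p = V.toScheme.fromSpecStalk ⟨x, h⟩ ≫ q := by
  haveI := (IsOpenImmersion.iff_isIso_stalkMap.mp (inferInstance : IsOpenImmersion V.ι)).2 ⟨x, h⟩
  rw [← cancel_epi (Spec.map (inv (V.ι.stalkMap ⟨x, h⟩)))]
  simpa [AlgebraicGeometry.Scheme.Opens.fromSpecStalkOfMem, Category.assoc] using H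

set_option maxHeartbeats 1000000 in
/-- Let `f : Z → W` be a proper morphism of finite type schemes over a field
`k`, and let `w ∈ W` be a closed point whose set-theoretic fibre `f⁻¹(w)` consists of a single
point `z`.  If the induced homomorphism of local rings `O_{W,w} → O_{Z,z}` is an isomorphism,
then there are open neighbourhoods `U` of `z` and `V` of `w` with `f⁻¹(V) ⊆ U` such that `f`
restricts to an isomorphism `U → V`. -/
theorem statement_1
    (k : Type) [Field k]
    (Z W : AlgebraicGeometry.Scheme)
    (sZ : Z ⟶ Spec (CommRingCat.of k)) (sW : W ⟶ Spec (CommRingCat.of k))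
    [LocallyOfFiniteType sZ] [QuasiCompact sZ]
    [LocallyOfFiniteType sW] [QuasiCompact sW]
    (f : Z ⟶ W) (hfk : f ≫ sW = sZ) [IsProper f]
    (w : W) (hwclosed : IsClosed ({w} : Set W))
    (z : Z) (hfib : f.base ⁻¹' {w} = {z})
    (hstalk : IsIso (f.stalkMap z)) :
    ∃ (U : Z.Opens) (V : W.Opens), z ∈ U ∧ w ∈ V ∧
      f.base ⁻¹' (V : Set W) ⊆ (U : Set Z) ∧ Scheme.RestrictsToIsoOn f U V := by
  have hzw : f.base z = w := by
    have : z ∈ f.base ⁻¹' {w} := by rw [hfib]; rfl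
    simpa using this
  subst hzw
  have hLNW : IsLocallyNoetherian W := aux_isLocallyNoetherian sW
  have hLNZ : IsLocallyNoetherian Z := aux_isLocallyNoetherian sZ
  set σ := f.stalkMap z with hσ
  -- Spread out the inverse stalk map to a morphism `g : V₀ ⟶ Z`.
  have h1 : (Spec.map (inv σ) ≫ Z.fromSpecStalk z) ≫ sZ
      = W.fromSpecStalk (f.base z) ≫ sW := by
    rw [← hfk, Category.assoc, ← Scheme.SpecMap_stalkMap_fromSpecStalk_assoc f (x := z),
      ← hσ, ← Spec.map_comp_assoc, IsIso.hom_inv_id, Spec.map_id, Category.id_comp]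
  obtain ⟨V₀, hw₀, g, hg₁, hg₂⟩ :=
    spread_out_of_isGermInjective' sW sZ (x := f.base z)
      (Spec.map (inv σ) ≫ Z.fromSpecStalk z) h1
  haveI : IsLocallyNoetherian V₀.toScheme := isLocallyNoetherian_of_isOpenImmersion V₀.ι
  -- `g ≫ f` agrees with the inclusion of `V₀` near `w`.
  have e1 : V₀.fromSpecStalkOfMem _ hw₀ ≫ (g ≫ f) = V₀.fromSpecStalkOfMem _ hw₀ ≫ V₀.ι := by
    rw [← Category.assoc, ← hg₁, Scheme.Opens.fromSpecStalkOfMem_ι, Category.assoc,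
      ← Scheme.SpecMap_stalkMap_fromSpecStalk f (x := z), ← hσ,
      ← Spec.map_comp_assoc, IsIso.hom_inv_id, Spec.map_id, Category.id_comp]
  have e1' := aux_fromSpecStalkOfMem_cancel V₀ _ hw₀ _ _ e1
  haveI : V₀.toScheme.IsGermInjectiveAt ⟨f.base z, hw₀⟩ :=
    (inferInstance : V₀.toScheme.IsGermInjective) _
  have spr1 := spread_out_unique_of_isGermInjective'
    (x := (⟨f.base z, hw₀⟩ : V₀.toScheme)) (g ≫ f) V₀.ι
  obtain ⟨U₁', hu₁, hU₁⟩ := spr1 e1'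
  -- `(f restricted to f⁻¹V₀) ≫ g` agrees with the inclusion of `f⁻¹V₀` near `z`.
  set P : Z.Opens := f ⁻¹ᵁ V₀ with hP
  have hz₀ : z ∈ P := hw₀
  haveI : IsLocallyNoetherian P.toScheme := isLocallyNoetherian_of_isOpenImmersion P.ι
  set r : P.toScheme ⟶ V₀.toScheme := f.resLE V₀ P le_rfl with hr
  have claimA : P.fromSpecStalkOfMem z hz₀ ≫ r = Spec.map σ ≫ V₀.fromSpecStalkOfMem _ hw₀ := by
    rw [← cancel_mono V₀.ι, Category.assoc, Category.assoc, Scheme.Hom.resLE_comp_ι,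
      Scheme.Opens.fromSpecStalkOfMem_ι_assoc, Scheme.Opens.fromSpecStalkOfMem_ι, hσ,
      Scheme.SpecMap_stalkMap_fromSpecStalk]
  have e2 : P.fromSpecStalkOfMem z hz₀ ≫ (r ≫ g) = P.fromSpecStalkOfMem z hz₀ ≫ P.ι := by
    rw [← Category.assoc, claimA, Category.assoc, ← hg₁, Scheme.Opens.fromSpecStalkOfMem_ι,
      ← Spec.map_comp_assoc, IsIso.inv_hom_id, Spec.map_id, Category.id_comp]
  have e2' := aux_fromSpecStalkOfMem_cancel P z hz₀ _ _ e2
  haveI : P.toScheme.IsGermInjectiveAt ⟨z, hz₀⟩ :=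
    (inferInstance : P.toScheme.IsGermInjective) _
  have spr2 := spread_out_unique_of_isGermInjective'
    (x := (⟨z, hz₀⟩ : P.toScheme)) (r ≫ g) P.ι
  obtain ⟨U₂', hu₂, hU₂⟩ := spr2 e2'
  -- Shrink using properness.
  set Uz : Z.Opens := P.ι ''ᵁ U₂' with hUz
  have hzUz : z ∈ Uz := ⟨⟨z, hz₀⟩, hu₂, rfl⟩
  set V₁ : W.Opens := V₀.ι ''ᵁ U₁' with hV₁
  have hwV₁ : f.base z ∈ V₁ := ⟨⟨f.base z, hw₀⟩, hu₁, rfl⟩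
  have hCclosed : IsClosed (f.base '' (↑Uz)ᶜ) := f.isClosedMap _ Uz.2.isClosed_compl
  set V : W.Opens := V₁ ⊓ ⟨(f.base '' (↑Uz)ᶜ)ᶜ, hCclosed.isOpen_compl⟩ with hV
  have hwV : f.base z ∈ V := by
    refine ⟨hwV₁, ?_⟩
    rintro ⟨x, hx, hxz⟩
    have : x ∈ f.base ⁻¹' {f.base z} := hxz
    rw [hfib] at this
    exact hx (this ▸ hzUz)
  set U : Z.Opens := f ⁻¹ᵁ V with hU
  have hUsub : (U : Set Z) ⊆ (Uz : Set Z) := by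
    intro x hx
    by_contra hxUz
    exact hx.2 ⟨x, hxUz, rfl⟩
  have hVV₀ : V ≤ V₀ := le_trans inf_le_left (Scheme.Opens.ι_image_le (U := V₀) U₁')
  have hUP : U ≤ P := fun x hx => hVV₀ hx
  have hVV₁ : V ≤ V₁ := inf_le_left
  -- lift the inclusion `V ⟶ V₀` through `U₁'`
  have hrange_c : Set.range (W.homOfLE hVV₀).base ⊆ Set.range U₁'.ι.base := by
    rintro _ ⟨t, rfl⟩
    rw [Scheme.Opens.range_ι]
    have h1 : V₀.ι.base ((W.homOfLE hVV₀).base t) = V.ι.base t :=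
      congr($(W.homOfLE_ι hVV₀).base t)
    have h2 : V.ι.base t ∈ V₁ := hVV₁ (by rw [← SetLike.mem_coe, ← Scheme.Opens.range_ι (U := V)]; exact ⟨t, rfl⟩)
    obtain ⟨u, hu, hu'⟩ := h2
    have : u = (W.homOfLE hVV₀).base t := V₀.ι.isOpenEmbedding.injective (by rw [h1]; exact hu')
    exact this ▸ hu
  have hcfac : IsOpenImmersion.lift U₁'.ι (W.homOfLE hVV₀) hrange_c ≫ U₁'.ι
      = W.homOfLE hVV₀ := IsOpenImmersion.lift_fac _ _ hrange_c
  have E1 : W.homOfLE hVV₀ ≫ (g ≫ f) = V.ι := by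
    rw [← hcfac, Category.assoc, hU₁, ← Category.assoc, hcfac, Scheme.homOfLE_ι]
  -- lift the inclusion `U ⟶ P` through `U₂'`
  have hrange_d : Set.range (Z.homOfLE hUP).base ⊆ Set.range U₂'.ι.base := by
    rintro _ ⟨t, rfl⟩
    rw [Scheme.Opens.range_ι]
    have h1 : P.ι.base ((Z.homOfLE hUP).base t) = U.ι.base t :=
      congr($(Z.homOfLE_ι hUP).base t)
    have h2 : U.ι.base t ∈ Uz := hUsub (by rw [← Scheme.Opens.range_ι (U := U)]; exact ⟨t, rfl⟩)
    obtain ⟨u, hu, hu'⟩ := h2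
    have : u = (Z.homOfLE hUP).base t := P.ι.isOpenEmbedding.injective (by rw [h1]; exact hu')
    exact this ▸ hu
  have hdfac : IsOpenImmersion.lift U₂'.ι (Z.homOfLE hUP) hrange_d ≫ U₂'.ι
      = Z.homOfLE hUP := IsOpenImmersion.lift_fac _ _ hrange_d
  have E2 : Z.homOfLE hUP ≫ (r ≫ g) = U.ι := by
    rw [← hdfac, Category.assoc, hU₂, ← Category.assoc, hdfac, Scheme.homOfLE_ι]
  -- construct the inverse morphism `b : V ⟶ U`
  have hrange_b : Set.range (W.homOfLE hVV₀ ≫ g).base ⊆ Set.range U.ι.base := by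
    rintro _ ⟨t, rfl⟩
    rw [Scheme.Opens.range_ι]
    have h1 : f.base ((W.homOfLE hVV₀ ≫ g).base t) = V.ι.base t := by
      have := congr($(E1).base t)
      simpa using this
    show f.base _ ∈ V
    rw [show (W.homOfLE hVV₀ ≫ g).base t = g.base ((W.homOfLE hVV₀).base t) from
      Scheme.Hom.comp_apply _ _ _] at h1 ⊢
    rw [h1]
    show V.ι.base t ∈ (V : Set W)
    rw [← Scheme.Opens.range_ι (U := V)]
    exact ⟨t, rfl⟩
  set b : V.toScheme ⟶ U.toScheme :=
    IsOpenImmersion.lift U.ι (W.homOfLE hVV₀ ≫ g) hrange_b with hb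
  have hbfac : b ≫ U.ι = W.homOfLE hVV₀ ≫ g := IsOpenImmersion.lift_fac _ _ hrange_b
  have hba : b ≫ f.resLE V U le_rfl = 𝟙 _ := by
    rw [← cancel_mono V.ι, Category.assoc, Scheme.Hom.resLE_comp_ι, ← Category.assoc, hbfac,
      Category.assoc, E1, Category.id_comp]
  have hab : f.resLE V U le_rfl ≫ b = 𝟙 _ := by
    rw [← cancel_mono U.ι, Category.assoc, hbfac, Category.id_comp]
    have hmid : f.resLE V U le_rfl ≫ W.homOfLE hVV₀ = Z.homOfLE hUP ≫ r := by
      rw [← cancel_mono V₀.ι, Category.assoc, Scheme.homOfLE_ι, Scheme.Hom.resLE_comp_ι,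
        Category.assoc, hr, Scheme.Hom.resLE_comp_ι, ← Category.assoc, Scheme.homOfLE_ι]
    rw [← Category.assoc, hmid, Category.assoc, E2]
  refine ⟨U, V, hwV, hwV, fun x hx => hx, le_rfl, ⟨b, hab, hba⟩⟩
end

section
/- Let f : Z → W be a proper morphism of schemes of finite type over a field k, and let w ∈ W be a closed point whose set-theoretic fibre f⁻¹(w) consists of a single point z. If the canonical morphism O_W → f_*(O_Z) is an isomorphism, then there exist open neighbourhoods U of z in Z and V of w in W with f⁻¹(V) ⊆ U such that f restricts to an isomorphism U → V (so the birational inverse f⁻¹ is defined and a local isomorphism at w). -/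
open AlgebraicGeometry CategoryTheory
open Opposite

/-- Let `f : Z → W` be a proper morphism of finite type schemes over a field
`k`, and let `w ∈ W` be a closed point whose set-theoretic fibre `f⁻¹(w)` consists of a single
point `z`.  If the canonical morphism `O_W → f_*(O_Z)` is an isomorphism, then there are open
neighbourhoods `U` of `z` and `V` of `w` with `f⁻¹(V) ⊆ U` such that `f` restricts to an
isomorphism `U → V`. -/
theorem statement_2
    (k : Type) [Field k]
    (Z W : AlgebraicGeometry.Scheme)
    (sZ : Z ⟶ Spec (CommRingCat.of k)) (sW : W ⟶ Spec (CommRingCat.of k))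
    [LocallyOfFiniteType sZ] [QuasiCompact sZ]
    [LocallyOfFiniteType sW] [QuasiCompact sW]
    (f : Z ⟶ W) (hfk : f ≫ sW = sZ) [IsProper f]
    (w : W) (hwclosed : IsClosed ({w} : Set W))
    (z : Z) (hfib : f.base ⁻¹' {w} = {z})
    (hpush : IsIso f.c) :
    ∃ (U : Z.Opens) (V : W.Opens), z ∈ U ∧ w ∈ V ∧
      f.base ⁻¹' (V : Set W) ⊆ (U : Set Z) ∧ Scheme.RestrictsToIsoOn f U V := by
  -- `f z = w`
  have hfz : f.base z = w := by
    have h : z ∈ f.base ⁻¹' {w} := by rw [hfib]; exact rfl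
    exact h
  -- choose an affine open neighbourhood `U₀` of `z`
  obtain ⟨U₀, hU₀, hzU₀⟩ : ∃ U₀ : Z.Opens, IsAffineOpen U₀ ∧ z ∈ U₀ := by
    obtain ⟨_, ⟨U₀, hU₀, rfl⟩, hz, -⟩ :=
      Z.isBasis_affineOpens.exists_subset_of_mem_open (Set.mem_univ z) isOpen_univ
    exact ⟨U₀, hU₀, hz⟩
  -- `f` is a closed map, so the image of the complement of `U₀` is closed and misses `w`
  have hclosed : IsClosed (f.base '' (↑U₀)ᶜ) := f.isClosedMap _ U₀.2.isClosed_compl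
  have hwC : w ∉ f.base '' (↑U₀)ᶜ := by
    rintro ⟨x, hx, hfx⟩
    have hx' : x ∈ f.base ⁻¹' {w} := hfx
    rw [hfib] at hx'
    exact hx (hx' ▸ hzU₀)
  -- choose an affine open neighbourhood `V` of `w` avoiding that closed set
  obtain ⟨V, hV, hwV, hVsub⟩ : ∃ V : W.Opens, IsAffineOpen V ∧ w ∈ V ∧
      (V : Set W) ⊆ (f.base '' (↑U₀)ᶜ)ᶜ := by
    obtain ⟨_, ⟨V, hV, rfl⟩, hw, hsub⟩ :=
      W.isBasis_affineOpens.exists_subset_of_mem_open hwC hclosed.isOpen_compl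
    exact ⟨V, hV, hw, hsub⟩
  -- then `f ⁻¹ᵁ V ≤ U₀`
  have hpre : f ⁻¹ᵁ V ≤ U₀ := by
    intro x hx
    by_contra hxU
    exact (hVsub hx) ⟨x, hxU, rfl⟩
  have hzV : z ∈ f ⁻¹ᵁ V := show f.base z ∈ V by rw [hfz]; exact hwV
  -- choose a basic open of `U₀` around `z` inside `f ⁻¹ᵁ V`
  obtain ⟨a, ha₁, ha₂⟩ := hU₀.exists_basicOpen_le (V := f ⁻¹ᵁ V) ⟨z, hzV⟩ hzU₀
  -- transfer the corresponding section through the isomorphism `O_W(V) ≅ O_Z(f⁻¹V)`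
  haveI : IsIso (f.app V) := NatIso.isIso_app_of_isIso f.c (op V)
  set r : Γ(Z, f ⁻¹ᵁ V) := Z.presheaf.map (homOfLE hpre).op a with hr
  set s : Γ(W, V) := inv (f.app V) r with hs
  have hfs : f.app V s = r := by
    rw [hs, ← CommRingCat.comp_apply, IsIso.inv_hom_id, CommRingCat.id_apply]
  have hbr : Z.basicOpen r = Z.basicOpen a := by
    rw [hr, Z.basicOpen_res]
    exact inf_eq_right.mpr ha₁
  have hpreb : f ⁻¹ᵁ W.basicOpen s = Z.basicOpen a := by
    rw [Scheme.preimage_basicOpen, hfs, hbr]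
  set V₁ : W.Opens := W.basicOpen s with hV₁def
  have hzU₁ : z ∈ f ⁻¹ᵁ V₁ := by rw [hV₁def, hpreb]; exact ha₂
  have hwV₁ : w ∈ V₁ := by rw [← hfz]; exact hzU₁
  have hV₁aff : IsAffineOpen V₁ := hV.basicOpen s
  have hU₁aff : IsAffineOpen (f ⁻¹ᵁ V₁) := by
    rw [hV₁def, hpreb]; exact hU₀.basicOpen a
  refine ⟨f ⁻¹ᵁ V₁, V₁, hzU₁, hwV₁, fun x hx => hx, le_rfl, ?_⟩
  -- the restriction `f⁻¹V₁ → V₁` is a morphism of affine schemes inducing an isomorphism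
  -- on global sections, hence an isomorphism
  haveI : IsAffine V₁.toScheme := hV₁aff
  haveI : IsAffine (f ⁻¹ᵁ V₁).toScheme := hU₁aff
  have happ : IsIso (f.appLE V₁ (f ⁻¹ᵁ V₁) le_rfl) := by
    rw [Scheme.Hom.appLE_eq_app]
    exact NatIso.isIso_app_of_isIso f.c (op V₁)
  have happTop : IsIso ((f.resLE V₁ (f ⁻¹ᵁ V₁) le_rfl).appTop) :=
    (MorphismProperty.arrow_mk_iso_iff (MorphismProperty.isomorphisms CommRingCat)
      (arrowResLEAppIso f V₁ (f ⁻¹ᵁ V₁) le_rfl)).mpr happ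
  have : (MorphismProperty.isomorphisms Scheme) (f.resLE V₁ (f ⁻¹ᵁ V₁) le_rfl) := by
    exact (MorphismProperty.arrow_mk_iso_iff (MorphismProperty.isomorphisms _)
      (arrowIsoSpecΓOfIsAffine _)).mpr
      (inferInstanceAs (IsIso (Spec.map (f.resLE V₁ (f ⁻¹ᵁ V₁) le_rfl).appTop)))
  exact this
end

section
/- Let A = ⊕_{n≥0} A_n be an ℕ-graded k-algebra, L a field extension of k, and M = ⊕_{s≥0} M_s a graded (L, A)-bimodule (the left L-action commuting with the right A-action) such that each M_s is a one-dimensional L-vector space and M_s A_u ⊆ M_{s+u} for all s, u. Suppose that the two-sided ideal P = {a ∈ A : Ma = 0} satisfies P = ann_A(M_s) = {a ∈ A : M_s a = 0} for every s ≥ 0. Then P is completely prime on homogeneous elements: whenever a ∈ A_u and b ∈ A_v are homogeneous with a ∉ P and b ∉ P, one has ab ∉ P (equivalently, A/P has no nonzero homogeneous zero divisors). -/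
open MulOpposite

/-- Let `A = ⊕ₙ Aₙ` be an `ℕ`-graded `k`-algebra, `L` a field extension of
`k`, and `M = ⊕ₛ Mₛ` a graded `(L, A)`-bimodule (the left `L`-action commuting with the right
`A`-action, encoded as an `Aᵐᵒᵖ`-action) such that each `Mₛ` is a one-dimensional `L`-vector
space and `Mₛ Aᵤ ⊆ M_{s+u}`.  Suppose the two-sided ideal `P = {a : A | M a = 0}` satisfies
`P = ann_A (Mₛ)` for every `s`.  Then `P` is completely prime on homogeneous elements. -/
theorem statement_10
    (k : Type) [Field k]
    (A : Type) [Ring A] [Algebra k A]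
    (𝒜 : ℕ → Submodule k A) [GradedAlgebra 𝒜]
    (L : Type) [Field L] [Algebra k L]
    (M : Type) [AddCommGroup M] [Module L M] [Module Aᵐᵒᵖ M]
    (hbimod : ∀ (ℓ : L) (a : Aᵐᵒᵖ) (m : M), a • (ℓ • m) = ℓ • (a • m))
    (ℳ : ℕ → Submodule L M)
    (hinternal : DirectSum.IsInternal ℳ)
    (honedim : ∀ s : ℕ, Module.finrank L (ℳ s) = 1)
    (hmul : ∀ (s u : ℕ) (m : M) (a : A), m ∈ ℳ s → a ∈ 𝒜 u → (op a) • m ∈ ℳ (s + u))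
    (P : Set A)
    (hP : P = {a : A | ∀ m : M, (op a) • m = 0})
    (hPs : ∀ s : ℕ, P = {a : A | ∀ m ∈ ℳ s, (op a) • m = 0}) :
    ∀ (u v : ℕ) (a b : A), a ∈ 𝒜 u → b ∈ 𝒜 v → a ∉ P → b ∉ P → a * b ∉ P := by
  intro u v a b hau hbv haP hbP hab
  -- since a ∉ P = ann(ℳ 0), there is m ∈ ℳ 0 with op a • m ≠ 0
  rw [hPs 0] at haP
  simp only [Set.mem_setOf_eq, not_forall] at haP
  obtain ⟨m, hm0, hma⟩ := haP
  -- op a • m ∈ ℳ u, nonzero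
  have hxmem : (op a) • m ∈ ℳ (0 + u) := hmul 0 u m a hm0 hau
  rw [zero_add] at hxmem
  set x : ℳ u := ⟨(op a) • m, hxmem⟩ with hxdef
  have hxne : x ≠ 0 := by
    intro h
    apply hma
    have := congrArg (Subtype.val) h
    simpa [hxdef] using this
  -- since b ∉ P = ann(ℳ u), there is n ∈ ℳ u with op b • n ≠ 0
  rw [hPs u] at hbP
  simp only [Set.mem_setOf_eq, not_forall] at hbP
  obtain ⟨n, hnu, hnb⟩ := hbP
  -- n is a multiple of x
  have h1 := (finrank_eq_one_iff_of_nonzero' x hxne).mp (honedim u)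
  obtain ⟨c, hc⟩ := h1 (⟨n, hnu⟩ : ℳ u)
  have hcval : c • ((op a) • m) = n := congrArg Subtype.val hc
  apply hnb
  rw [← hcval, hbimod]
  have hzero : (op (a * b)) • m = 0 := by
    rw [hP] at hab; exact hab m
  rw [op_mul, mul_smul] at hzero
  rw [hzero, smul_zero]
end

section
/- Let A be a connected graded k-algebra generated in degree one, and let J be a homogeneous right ideal of A such that dim_k(A_n / J_n) = 1 for all n ≥ 0 and such that J is generated as a right ideal in degrees ≤ m₀ (i.e. J_{n+1} = J_n A_1 for all n ≥ m₀). Then for every m ≥ m₀ and every homogeneous right ideal I of A with I_n = J_n for all n ≤ m and dim_k(A_{m+1}/I_{m+1}) = 1, one has I_{m+1} = J_{m+1}. In particular, for each m ≥ m₀ the truncated point module (A/J)_{≤ m} has a unique extension to a truncated point module of length m+2. -/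
/-- Let `A` be a connected graded `k`-algebra generated in degree one and
`J` a homogeneous right ideal of `A` with `dim_k (Aₙ/Jₙ) = 1` for all `n`, generated as a right
ideal in degrees `≤ m₀`.  Then for every `m ≥ m₀`, any homogeneous right ideal `I` agreeing with
`J` in degrees `≤ m` and of codimension one in degree `m+1` satisfies `I_{m+1} = J_{m+1}`. -/
theorem statement_11
    (k : Type) [Field k] [IsAlgClosed k]
    (A : Type) [Ring A] [Algebra k A]
    (𝒜 : ℕ → Submodule k A) [GradedAlgebra 𝒜]
    -- `A` is connected graded: `A₀ = k` and each `Aₙ` is finite dimensional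
    (hconn : 𝒜 0 = (1 : Submodule k A))
    (hfd : ∀ n : ℕ, FiniteDimensional k (𝒜 n))
    -- `A` is generated in degree one
    (hgen1 : ∀ n : ℕ, 𝒜 (n + 1) = 𝒜 n * 𝒜 1)
    -- `J` is a homogeneous right ideal, `Jₙ = J ∩ Aₙ`
    (J : ℕ → Submodule k A)
    (hJle : ∀ n, J n ≤ 𝒜 n)
    (hJright : ∀ n m : ℕ, J n * 𝒜 m ≤ J (n + m))
    -- `dim_k (Aₙ / Jₙ) = 1` for all `n ≥ 0`
    (hJcodim : ∀ n : ℕ,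
      Module.finrank k (↥(𝒜 n) ⧸ (J n).comap (𝒜 n).subtype) = 1)
    -- `J` is generated as a right ideal in degrees `≤ m₀`
    (m₀ : ℕ)
    (hJdeg : ∀ n : ℕ, m₀ ≤ n → J (n + 1) = J n * 𝒜 1) :
    ∀ m : ℕ, m₀ ≤ m →
      ∀ I : ℕ → Submodule k A,
        (∀ n, I n ≤ 𝒜 n) →
        (∀ n m' : ℕ, I n * 𝒜 m' ≤ I (n + m')) →
        (∀ n ≤ m, I n = J n) →
        Module.finrank k (↥(𝒜 (m + 1)) ⧸ (I (m + 1)).comap (𝒜 (m + 1)).subtype) = 1 →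
        I (m + 1) = J (m + 1) := by
  intro m hm I hIle hIright hIeq hIcodim
  have hJI : J (m + 1) ≤ I (m + 1) := by
    rw [hJdeg m hm, ← hIeq m le_rfl]
    exact hIright m 1
  haveI := hfd (m + 1)
  -- compare the comaps inside the finite-dimensional space 𝒜 (m+1)
  have hcle : (J (m + 1)).comap (𝒜 (m + 1)).subtype ≤ (I (m + 1)).comap (𝒜 (m + 1)).subtype :=
    Submodule.comap_mono hJI
  have hrank : Module.finrank k ((J (m + 1)).comap (𝒜 (m + 1)).subtype)
      = Module.finrank k ((I (m + 1)).comap (𝒜 (m + 1)).subtype) := by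
    have h1 := Submodule.finrank_quotient_add_finrank ((J (m + 1)).comap (𝒜 (m + 1)).subtype)
    have h2 := Submodule.finrank_quotient_add_finrank ((I (m + 1)).comap (𝒜 (m + 1)).subtype)
    rw [hJcodim (m + 1)] at h1
    rw [hIcodim] at h2
    omega
  have hceq : (J (m + 1)).comap (𝒜 (m + 1)).subtype = (I (m + 1)).comap (𝒜 (m + 1)).subtype :=
    Submodule.eq_of_le_of_finrank_eq hcle hrank
  have hmapJ : Submodule.map (𝒜 (m + 1)).subtype ((J (m + 1)).comap (𝒜 (m + 1)).subtype)
      = J (m + 1) := by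
    rw [Submodule.map_comap_eq, Submodule.range_subtype]
    exact inf_eq_right.2 (hJle (m + 1))
  have hmapI : Submodule.map (𝒜 (m + 1)).subtype ((I (m + 1)).comap (𝒜 (m + 1)).subtype)
      = I (m + 1) := by
    rw [Submodule.map_comap_eq, Submodule.range_subtype]
    exact inf_eq_right.2 (hIle (m + 1))
  rw [← hmapI, ← hmapJ, hceq]
end

section
/- Let k be a field, Y a proper k-scheme, X an integral k-scheme of finite type, and π : Y → X a surjective birational morphism. Assume X carries an automorphism τ and there is a finite set P of closed points of X such that π restricts to an isomorphism π⁻¹(U) → U, where U = X ∖ P, and every point of P lies on an infinite τ-orbit (the points τ^i(p), i ∈ ℤ, are pairwise distinct for each p ∈ P). Then X is separated and proper over k. -/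
open AlgebraicGeometry CategoryTheory CategoryTheory.Limits IsLocalRing

/-- `π` is a birational morphism: it restricts to an isomorphism between dense open
subschemes. -/
def Scheme.IsBirationalMor {Y X : AlgebraicGeometry.Scheme} (π : Y ⟶ X) : Prop :=
  ∃ (U : Y.Opens) (V : X.Opens), Dense (U : Set Y) ∧ Dense (V : Set X) ∧
    ∃ e : U ≤ π ⁻¹ᵁ V, IsIso (π.resLE V U e)

/-- Let `k` be a field, `Y` a proper `k`-scheme, `X` an integral `k`-scheme
of finite type, and `π : Y → X` a surjective birational morphism.  Assume `X` carries an
automorphism `τ` and there is a finite set `P` of closed points of `X` such that `π` restricts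
to an isomorphism `π⁻¹(U) → U`, where `U = X ∖ P`, and every point of `P` lies on an infinite
`τ`-orbit.  Then `X` is separated and proper over `k`. -/
theorem statement_12
    (k : Type) [Field k]
    (Y X : AlgebraicGeometry.Scheme)
    (sY : Y ⟶ Spec (CommRingCat.of k)) (sX : X ⟶ Spec (CommRingCat.of k))
    [IsProper sY]
    [IsIntegral X] [LocallyOfFiniteType sX] [QuasiCompact sX]
    (π : Y ⟶ X) (hπk : π ≫ sX = sY)
    (hsurj : Function.Surjective π.base)
    (hbir : Scheme.IsBirationalMor π)
    (τ : Aut X)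
    (P : Set X) (hPfin : P.Finite)
    (hPclosed : ∀ p ∈ P, IsClosed ({p} : Set X))
    -- `π` restricts to an isomorphism `π⁻¹(U) → U` where `U = X ∖ P`
    (hisoU : ∀ V : X.Opens, (V : Set X) = Pᶜ → IsIso (π.resLE V (π ⁻¹ᵁ V) le_rfl))
    -- every point of `P` lies on an infinite `τ`-orbit
    (horb : ∀ p ∈ P, ∀ i j : ℤ, i ≠ j → (τ ^ i).hom.base p ≠ (τ ^ j).hom.base p) :
    IsSeparated sX ∧ IsProper sX := by
  -- `X` is universally closed over `k`, as the surjective image of the proper `Y`.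
  haveI : AlgebraicGeometry.Surjective π := ⟨hsurj⟩
  haveI : UniversallyClosed (π ≫ sX) := by rw [hπk]; infer_instance
  haveI hUC : UniversallyClosed sX := UniversallyClosed.of_comp_surjective π sX
  -- `X` is locally Noetherian, hence quasi-separated.
  haveI : IsLocallyNoetherian X := by
    constructor
    intro U
    have h := LocallyOfFiniteType.finiteType_of_affine_subset sX
      (isAffineOpen_top _) U.2 le_top
    letI := (sX.appLE ⊤ U le_top).hom.toAlgebra
    haveI : Algebra.FiniteType Γ(Spec (CommRingCat.of k), ⊤) Γ(X, U) := h
    haveI : IsNoetherianRing Γ(Spec (CommRingCat.of k), ⊤) :=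
      isNoetherianRing_of_ringEquiv k
        (Scheme.ΓSpecIso (CommRingCat.of k)).symm.commRingCatIsoToRingEquiv
    exact Algebra.FiniteType.isNoetherianRing Γ(Spec (CommRingCat.of k), ⊤) Γ(X, U)
  haveI : QuasiSeparated sX := (quasiSeparated_iff_quasiSeparatedSpace sX).mpr inferInstance
  -- `Y` is a separated scheme.
  haveI hYsep : Y.IsSeparated := ⟨by rw [← Limits.terminal.comp_from sY]; infer_instance⟩
  -- The open subscheme `U = X ∖ P` and the isomorphism `π⁻¹(U) ≅ U`.
  have hPc : IsClosed P := by
    rw [← Set.biUnion_of_singleton P]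
    exact hPfin.isClosed_biUnion hPclosed
  set V : X.Opens := ⟨Pᶜ, hPc.isOpen_compl⟩ with hV
  haveI hiso : IsIso (π.resLE V (π ⁻¹ᵁ V) le_rfl) := hisoU V rfl
  set g : ((π ⁻¹ᵁ V).toScheme) ⟶ V.toScheme := π.resLE V (π ⁻¹ᵁ V) le_rfl with hg
  -- `π⁻¹(U)` is a separated scheme, being an open subscheme of `Y`.
  haveI hZsep : (π ⁻¹ᵁ V).toScheme.IsSeparated :=
    ⟨by rw [← Limits.terminal.comp_from (π ⁻¹ᵁ V).ι]; infer_instance⟩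
  -- The valuative criterion of separatedness (uniqueness of lifts).
  have key : ValuativeCriterion.Uniqueness sX := by
    intro S
    constructor
    rintro ⟨l₁, hl₁, hl₁'⟩ ⟨l₂, hl₂, hl₂'⟩
    ext : 1
    dsimp only at *
    set ι : Spec (.of S.K) ⟶ Spec (.of S.R) :=
      Spec.map (CommRingCat.ofHom (algebraMap S.R S.K)) with hι
    set s : Spec (CommRingCat.of S.R) := closedPoint S.R with hs
    -- choose `m` such that `τ^m(P)` avoids the closed points of the two lifts
    obtain ⟨m, hm⟩ : ∃ m : ℤ, ∀ p ∈ P,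
        (τ ^ m).hom.base p ≠ l₁.base s ∧ (τ ^ m).hom.base p ≠ l₂.base s := by
      have hbad : {n : ℤ | ∃ p ∈ P, (τ ^ n).hom.base p = l₁.base s ∨
          (τ ^ n).hom.base p = l₂.base s}.Finite := by
        refine Set.Finite.subset (hPfin.biUnion (fun p hp => Set.Finite.preimage
          (Function.Injective.injOn (f := fun n : ℤ => (τ ^ n).hom.base p) ?_)
          ((Set.finite_singleton (l₁.base s)).insert (l₂.base s)))) ?_
        · intro n₁ n₂ h
          by_contra hne
          exact horb p hp n₁ n₂ hne h
        · rintro n ⟨p, hp, h⟩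
          exact Set.mem_biUnion hp (by simpa [or_comm] using h)
      obtain ⟨m, hmm⟩ := hbad.infinite_compl.nonempty
      exact ⟨m, fun p hp =>
        ⟨fun h => hmm ⟨p, hp, Or.inl h⟩, fun h => hmm ⟨p, hp, Or.inr h⟩⟩⟩
    -- the twisted lifts land in `U = X ∖ P`
    have hcomp : ∀ y : X, (τ ^ m).hom.base ((τ ^ m).inv.base y) = y := by
      intro y
      have h := congrArg (fun f : X ⟶ X => f.base y) (τ ^ m).inv_hom_id
      simpa using h
    have hrange : ∀ l : Spec (CommRingCat.of S.R) ⟶ X,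
        (∀ p ∈ P, (τ ^ m).hom.base p ≠ l.base s) →
        Set.range (l ≫ (τ ^ m).inv).base ⊆ (V : Set X) := by
      rintro l hl _x ⟨x, rfl⟩
      show (τ ^ m).inv.base (l.base x) ∈ (V : Set X)
      show (τ ^ m).inv.base (l.base x) ∉ P
      intro hp
      have hx : l.base x = (τ ^ m).hom.base ((τ ^ m).inv.base (l.base x)) :=
        (hcomp (l.base x)).symm
      have hcl : IsClosed ({l.base x} : Set X) := by
        rw [hx]
        have hcl2 := (Scheme.homeoOfIso (τ ^ m)).isClosedMap _ (hPclosed _ hp)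
        rw [Set.image_singleton] at hcl2
        exact hcl2
      haveI : IsLocalRing ↑(CommRingCat.of S.R) := inferInstanceAs (IsLocalRing S.R)
      have hspec : l.base x ⤳ l.base s :=
        (specializes_closedPoint x).map l.base.hom.2
      have : l.base s ∈ closure ({l.base x} : Set X) :=
        specializes_iff_mem_closure.mp hspec
      rw [hcl.closure_eq, Set.mem_singleton_iff] at this
      exact hl _ hp (by rw [← hx, ← this])
    -- lift the twisted maps through the open immersion `U ⟶ X` and the iso `π⁻¹(U) ≅ U`
    have h₁ : Set.range (l₁ ≫ (τ ^ m).inv).base ⊆ Set.range V.ι.base := by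
      rw [Scheme.Opens.range_ι]
      exact hrange l₁ fun p hp => (hm p hp).1
    have h₂ : Set.range (l₂ ≫ (τ ^ m).inv).base ⊆ Set.range V.ι.base := by
      rw [Scheme.Opens.range_ι]
      exact hrange l₂ fun p hp => (hm p hp).2
    set m₁ := IsOpenImmersion.lift V.ι (l₁ ≫ (τ ^ m).inv) h₁ with hm₁'
    set m₂ := IsOpenImmersion.lift V.ι (l₂ ≫ (τ ^ m).inv) h₂ with hm₂'
    have hm₁ : m₁ ≫ V.ι = l₁ ≫ (τ ^ m).inv := IsOpenImmersion.lift_fac _ _ h₁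
    have hm₂ : m₂ ≫ V.ι = l₂ ≫ (τ ^ m).inv := IsOpenImmersion.lift_fac _ _ h₂
    have hK : ι ≫ l₁ = ι ≫ l₂ := hl₁.trans hl₂.symm
    have hKm : ι ≫ m₁ = ι ≫ m₂ := by
      rw [← cancel_mono V.ι]
      simp only [Category.assoc, hm₁, hm₂]
      rw [← Category.assoc, hK, Category.assoc]
    set n₁ : Spec (CommRingCat.of S.R) ⟶ (π ⁻¹ᵁ V).toScheme := m₁ ≫ inv g with hn₁
    set n₂ : Spec (CommRingCat.of S.R) ⟶ (π ⁻¹ᵁ V).toScheme := m₂ ≫ inv g with hn₂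
    have hKn : ι ≫ n₁ = ι ≫ n₂ := by
      rw [hn₁, hn₂, ← Category.assoc, hKm, Category.assoc]
    -- uniqueness over the separated scheme `π⁻¹(U)`
    let S' : ValuativeCommSq (Limits.terminal.from (π ⁻¹ᵁ V).toScheme) :=
      ⟨S.R, S.K, ι ≫ n₁, Limits.terminal.from _, ⟨Limits.terminal.hom_ext _ _⟩⟩
    have hsub := IsSeparated.valuativeCriterion
      (f := Limits.terminal.from (π ⁻¹ᵁ V).toScheme) S'
    have hnn : n₁ = n₂ := by
      have he : (⟨n₁, rfl, Limits.terminal.hom_ext _ _⟩ : S'.commSq.LiftStruct) =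
          ⟨n₂, hKn.symm, Limits.terminal.hom_ext _ _⟩ := Subsingleton.elim _ _
      exact congrArg CommSq.LiftStruct.l he
    have hmm : m₁ = m₂ := by
      have : m₁ ≫ inv g ≫ g = m₂ ≫ inv g ≫ g := by
        rw [← Category.assoc, ← Category.assoc, ← hn₁, ← hn₂, hnn]
      simpa using this
    have : l₁ ≫ (τ ^ m).inv = l₂ ≫ (τ ^ m).inv := by rw [← hm₁, ← hm₂, hmm]
    exact (Iso.cancel_iso_inv_right _ _ _).mp this
  have hsep : IsSeparated sX := IsSeparated.of_valuativeCriterion sX key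
  haveI := hsep
  exact ⟨hsep, ⟨⟩⟩
end
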